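/- Let Φ be the standard normal distribution function and fix t ∈ ℝ. Then, uniformly for x ∈ [1/2, 1], (1 − Φ(u/x + t/(x u))) / (1 − Φ(u/x)) → exp(−t/x²) as u → ∞; that is, sup_{x ∈ [1/2,1]} | (1 − Φ(u/x + t/(xu)))/(1 − Φ(u/x)) − exp(−t/x²) | → 0 as u → ∞. -/

import Mathlib

open MeasureTheory ProbabilityTheory Filter

noncomputable section

/-- The Gumbel distribution function `Λ(x) = exp(-exp(-x))`. -/
def gumbel (x : ℝ) : ℝ := Real.exp (-Real.exp (-x))

/-- Distribution function of a real random variable. -/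
def df {Ω : Type*} [MeasurableSpace Ω] (μ : Measure Ω) (Y : Ω → ℝ) : ℝ → ℝ :=
  fun x => (μ {ω | Y ω ≤ x}).toReal

/-- Survival function of a real random variable. -/
def surv {Ω : Type*} [MeasurableSpace Ω] (μ : Measure Ω) (Y : Ω → ℝ) (u : ℝ) : ℝ :=
  (μ {ω | u < Y ω}).toReal

/-- Generalised inverse `G⁻¹(p) = inf {x : G x ≥ p}`. -/
def genInv (G : ℝ → ℝ) (p : ℝ) : ℝ := sInf {x : ℝ | p ≤ G x}

/-- The standard normal distribution function `Φ`. -/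
def stdNormalCDF (x : ℝ) : ℝ := ((gaussianReal 0 1) (Set.Iic x)).toReal

/-- The distribution of `S` has upper endpoint `1`. -/
def HasUpperEndpointOne {Ω : Type*} [MeasurableSpace Ω] (μ : Measure Ω) (S : Ω → ℝ) : Prop :=
  (∀ᵐ ω ∂μ, S ω ≤ 1) ∧ ∀ s : ℝ, s < 1 → 0 < μ {ω | s < S ω}

/-- The survival function of `S` is regularly varying at `1` with index `γ`. -/
def RegVarAtOne {Ω : Type*} [MeasurableSpace Ω] (μ : Measure Ω) (S : Ω → ℝ) (γ : ℝ) : Prop :=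
  ∀ t : ℝ, 0 < t →
    Tendsto (fun u : ℝ => surv μ S (1 - t / u) / surv μ S (1 - 1 / u)) atTop (nhds (t ^ γ))

/-- Assumption A of Hashorva and Weng, with explicit bounding variables `Sg` (index `γ`),
`St` (index `τ`) and threshold `ν ∈ (0,1)`. -/
def AssumptionA {Ω : Type*} [MeasurableSpace Ω] (μ : Measure Ω)
    (S Sg St : Ω → ℝ) (γ τ ν : ℝ) : Prop :=
  0 ≤ γ ∧ 0 ≤ τ ∧ ν ∈ Set.Ioo (0:ℝ) 1 ∧
  (∀ᵐ ω ∂μ, 0 ≤ S ω) ∧ HasUpperEndpointOne μ S ∧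
  (∀ᵐ ω ∂μ, 0 ≤ Sg ω) ∧ (∀ᵐ ω ∂μ, 0 ≤ St ω) ∧
  RegVarAtOne μ Sg γ ∧ RegVarAtOne μ St τ ∧
  ∀ u ∈ Set.Ioo ν (1:ℝ),
    μ {ω | u < S ω} ≤ μ {ω | u < St ω} ∧ μ {ω | u < Sg ω} ≤ μ {ω | u < S ω}

/-- `X_n, n ≥ 1` is a standard stationary Gaussian sequence with correlation function
`ρ` (`ρ 0 = 1`, `ρ n = E[X_1 X_{n+1}]`): every finite linear combination of the `X_i`,
`i ≥ 1`, is a centered Gaussian with variance given by the covariances `ρ (|i - j|)`. -/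
def IsStdStationaryGaussianSeq {Ω : Type*} [MeasurableSpace Ω] (μ : Measure Ω)
    (X : ℕ → Ω → ℝ) (ρ : ℕ → ℝ) : Prop :=
  (∀ i, Measurable (X i)) ∧ ρ 0 = 1 ∧
  ∀ (m : ℕ) (c : Fin m → ℝ) (k : ℕ),
    Measure.map (fun ω => ∑ i : Fin m, c i * X (k + 1 + (i : ℕ)) ω) μ
      = gaussianReal 0
          (Real.toNNReal (∑ i : Fin m, ∑ j : Fin m,
            c i * c j * ρ (((i : ℕ) : ℤ) - ((j : ℕ) : ℤ)).natAbs))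

/-- `M_n^* = max_{1 ≤ i ≤ n} S_i X_i` (junk value `0` for `n = 0`). -/
def Mstar {Ω : Type*} (S X : ℕ → Ω → ℝ) : ℕ → Ω → ℝ
  | 0 => fun _ => 0
  | 1 => fun ω => S 1 ω * X 1 ω
  | (n + 2) => fun ω => max (Mstar S X (n + 1) ω) (S (n + 2) ω * X (n + 2) ω)

/-- `H ∈ GMDA(w)`: Gumbel max-domain of attraction with positive scaling function `w`. -/
def GMDA (H : ℝ → ℝ) (w : ℝ → ℝ) : Prop :=
  (∀ u, 0 < w u) ∧
  ∀ x : ℝ, 0 ≤ x →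
    Tendsto (fun u : ℝ => (1 - H (u + x / w u)) / (1 - H u)) atTop (nhds (Real.exp (-x)))

section AuxGaussianTail
open Real

/-- standard normal pdf -/
def sφ (x : ℝ) : ℝ := (Real.sqrt (2 * π))⁻¹ * Real.exp (-x^2/2)

lemma sφ_eq : sφ = gaussianPDFReal 0 1 := by
  ext x
  simp [sφ, gaussianPDFReal, mul_one]

lemma sφ_pos (x : ℝ) : 0 < sφ x := by
  rw [sφ_eq]; exact gaussianPDFReal_pos 0 1 x one_ne_zero

lemma sφ_integrable : Integrable sφ := by
  rw [sφ_eq]; exact integrable_gaussianPDFReal 0 1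

lemma sφ_integral : ∫ x, sφ x = 1 := by
  rw [sφ_eq]; exact integral_gaussianPDFReal_eq_one 0 one_ne_zero

lemma stdNormalCDF_eq (z : ℝ) : stdNormalCDF z = ∫ x in Set.Iic z, sφ x := by
  rw [stdNormalCDF, gaussianReal_apply_eq_integral 0 one_ne_zero, ← sφ_eq,
    ENNReal.toReal_ofReal]
  exact setIntegral_nonneg measurableSet_Iic fun x _ => (sφ_pos x).le

lemma tail_eq (z : ℝ) : 1 - stdNormalCDF z = ∫ x in Set.Ioi z, sφ x := by
  rw [stdNormalCDF_eq, sub_eq_iff_eq_add, ← sφ_integral, ← setIntegral_union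
    ((Set.Iic_disjoint_Ioi le_rfl).symm) measurableSet_Iic sφ_integrable.integrableOn
    sφ_integrable.integrableOn, Set.union_comm, Set.Iic_union_Ioi, setIntegral_univ]

lemma sφ_hasDerivAt (x : ℝ) : HasDerivAt sφ (-x * sφ x) x := by
  have h : HasDerivAt (fun x : ℝ => -x^2/2) (-x) x := by
    have := (hasDerivAt_pow 2 x).neg.div_const 2
    simpa using this.congr_deriv (by ring)
  have h2 := (h.exp).const_mul (Real.sqrt (2 * π))⁻¹
  have : HasDerivAt sφ ((Real.sqrt (2 * π))⁻¹ * (Real.exp (-x^2/2) * -x)) x := h2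
  convert this using 1
  simp [sφ]; ring

lemma sφ_tendsto : Tendsto sφ atTop (nhds 0) := by
  have h : Tendsto (fun x : ℝ => -x^2/2) atTop atBot := by
    apply Tendsto.atBot_div_const two_pos
    exact tendsto_neg_atTop_atBot.comp (tendsto_pow_atTop two_ne_zero)
  have h2 := (Real.tendsto_exp_atBot.comp h).const_mul (Real.sqrt (2 * π))⁻¹
  unfold sφ
  simpa only [Function.comp_def, mul_zero] using h2

lemma sφ_div_tendsto : Tendsto (fun x => -(sφ x / x)) atTop (nhds 0) := by
  have := (sφ_tendsto.div_atTop tendsto_id).neg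
  simpa using this

lemma neg_sφ_hasDerivAt (x : ℝ) : HasDerivAt (fun s => -sφ s) (x * sφ x) x := by
  have := (sφ_hasDerivAt x).neg
  simpa only [neg_mul, neg_neg, Pi.neg_def] using this

lemma neg_sφ_tendsto : Tendsto (fun s => -sφ s) atTop (nhds 0) := by
  simpa using sφ_tendsto.neg

lemma integral_mul_sφ {z : ℝ} (hz : 0 < z) :
    ∫ x in Set.Ioi z, x * sφ x = sφ z := by
  have h := integral_Ioi_of_hasDerivAt_of_nonneg (g := fun s => -sφ s)
    (g' := fun s => s * sφ s) (a := z) (l := 0)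
    (neg_sφ_hasDerivAt z).continuousAt.continuousWithinAt
    (fun x _ => neg_sφ_hasDerivAt x)
    (fun x hx => mul_nonneg (hz.trans hx).le (sφ_pos x).le)
    neg_sφ_tendsto
  simpa using h

lemma integrableOn_mul_sφ {z : ℝ} (hz : 0 < z) :
    IntegrableOn (fun x => x * sφ x) (Set.Ioi z) := by
  exact integrableOn_Ioi_deriv_of_nonneg
    (neg_sφ_hasDerivAt z).continuousAt.continuousWithinAt
    (fun x _ => neg_sφ_hasDerivAt x)
    (fun x hx => mul_nonneg (hz.trans hx).le (sφ_pos x).le)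
    neg_sφ_tendsto

lemma F2_hasDerivAt {x : ℝ} (hx : x ≠ 0) :
    HasDerivAt (fun s => -(sφ s / s)) (sφ x * (1 + 1/x^2)) x := by
  have h := ((sφ_hasDerivAt x).div (hasDerivAt_id x) hx).neg
  apply h.congr_deriv
  simp only [id]
  field_simp
  ring

lemma integral_sφ_one_add {z : ℝ} (hz : 0 < z) :
    ∫ x in Set.Ioi z, sφ x * (1 + 1/x^2) = sφ z / z := by
  have h := integral_Ioi_of_hasDerivAt_of_nonneg (g := fun s => -(sφ s / s))
    (g' := fun x => sφ x * (1 + 1/x^2)) (a := z) (l := 0)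
    (F2_hasDerivAt hz.ne').continuousAt.continuousWithinAt
    (fun x hx => F2_hasDerivAt (hz.trans hx).ne')
    (fun x hx => by have := sφ_pos x; have h2 := (hz.trans hx); positivity)
    sφ_div_tendsto
  simpa using h

lemma integrableOn_sφ_one_add {z : ℝ} (hz : 0 < z) :
    IntegrableOn (fun x => sφ x * (1 + 1/x^2)) (Set.Ioi z) := by
  exact integrableOn_Ioi_deriv_of_nonneg
    (F2_hasDerivAt hz.ne').continuousAt.continuousWithinAt
    (fun x hx => F2_hasDerivAt (hz.trans hx).ne')
    (fun x hx => by have := sφ_pos x; have h2 := (hz.trans hx); positivity)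
    sφ_div_tendsto

lemma mills_upper {z : ℝ} (hz : 0 < z) : 1 - stdNormalCDF z ≤ sφ z / z := by
  rw [tail_eq]
  have h1 : ∫ x in Set.Ioi z, sφ x ≤ ∫ x in Set.Ioi z, z⁻¹ * (x * sφ x) := by
    apply setIntegral_mono_on sφ_integrable.integrableOn
      ((integrableOn_mul_sφ hz).const_mul _) measurableSet_Ioi
    intro x hx
    have hxz := (Set.mem_Ioi.mp hx)
    have := sφ_pos x
    rw [← mul_assoc]
    nth_rewrite 1 [← one_mul (sφ x)]
    apply mul_le_mul_of_nonneg_right _ this.le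
    rw [← div_eq_inv_mul, le_div_iff₀ hz, one_mul]
    exact hxz.le
  have h2 : ∫ x in Set.Ioi z, z⁻¹ * (x * sφ x) = sφ z / z := by
    rw [integral_const_mul, integral_mul_sφ hz, inv_mul_eq_div]
  linarith

lemma mills_lower {z : ℝ} (hz : 0 < z) :
    z * sφ z / (z^2 + 1) ≤ 1 - stdNormalCDF z := by
  have key : sφ z / z ≤ (1 + 1/z^2) * (1 - stdNormalCDF z) := by
    rw [tail_eq, ← integral_sφ_one_add hz, ← integral_const_mul]
    apply setIntegral_mono_on (integrableOn_sφ_one_add hz)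
      (sφ_integrable.integrableOn.const_mul _) measurableSet_Ioi
    intro x hx
    have hx' := hz.trans (Set.mem_Ioi.mp hx)
    rw [mul_comm]
    apply mul_le_mul_of_nonneg_right _ (sφ_pos x).le
    have : 1/x^2 ≤ 1/z^2 := by
      apply one_div_le_one_div_of_le (by positivity)
      exact pow_le_pow_left₀ hz.le (Set.mem_Ioi.mp hx).le 2
    linarith
  have hz2 : (0:ℝ) < z^2 + 1 := by positivity
  rw [div_le_iff₀ hz2]
  have h3 := mul_le_mul_of_nonneg_right key (by positivity : (0:ℝ) ≤ z^3)
  have e1 : sφ z / z * z^3 = sφ z * z^2 := by field_simp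
  have e2 : (1 + 1/z^2) * (1 - stdNormalCDF z) * z^3
      = (z^2 + 1) * (1 - stdNormalCDF z) * z := by field_simp
  rw [e1, e2] at h3
  nlinarith [h3, hz, sφ_pos z]

lemma tail_pos (z : ℝ) : 0 < 1 - stdNormalCDF z := by
  rw [tail_eq]
  rw [setIntegral_pos_iff_support_of_nonneg_ae
    (ae_of_all _ fun x => (sφ_pos x).le) sφ_integrable.integrableOn]
  have : Function.support sφ = Set.univ := by
    ext x; simp [Function.support, (sφ_pos x).ne']
  rw [this, Set.univ_inter]
  simp [Real.volume_Ioi]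

set_option maxHeartbeats 4000000 in
lemma ratio_bound (t : ℝ) {u x : ℝ} (hx1 : 1/2 ≤ x) (hx2 : x ≤ 1) (hu : 2 + 4*|t| ≤ u) :
    |(1 - stdNormalCDF (u/x + t/(x*u))) / (1 - stdNormalCDF (u/x)) - Real.exp (-t/x^2)|
      ≤ Real.exp (4*|t|) * (2*t^2 + 8 + 24*|t|) / u^2 := by
  have ht : 0 ≤ |t| := abs_nonneg t
  have hu2 : (2:ℝ) ≤ u := by linarith
  have hu0 : (0:ℝ) < u := by linarith
  have hx0 : (0:ℝ) < x := by linarith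
  set b := u/x with hb
  set c := t/(x*u) with hc
  have hbu : u ≤ b := by rw [hb, le_div_iff₀ hx0]; nlinarith
  have hb2u : b ≤ 2*u := by rw [hb, div_le_iff₀ hx0]; nlinarith
  have hbc : b * c = t/x^2 := by rw [hb, hc]; field_simp
  have hcabs : |c| ≤ 2*|t|/u := by
    rw [hc, abs_div, abs_of_pos (by positivity : (0:ℝ) < x*u),
      div_le_div_iff₀ (by positivity) hu0]
    nlinarith [mul_nonneg (mul_nonneg ht hu0.le) (show (0:ℝ) ≤ 2*x - 1 by linarith)]
  have hchalf : |c| ≤ 1/2 := by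
    have h2 : 2*|t|/u ≤ 1/2 := by rw [div_le_iff₀ hu0]; nlinarith
    linarith
  have hc2 : c^2 ≤ 4*t^2/u^2 := by
    have h := mul_self_le_mul_self (abs_nonneg c) hcabs
    have e : 2*|t|/u * (2*|t|/u) = 4*t^2/u^2 := by
      rw [div_mul_div_comm]; congr 1; · nlinarith [sq_abs t]
      · ring
    nlinarith [sq_abs c]
  have hcql : -(1/2) ≤ c := (abs_le.mp hchalf).1
  have hcqu : c ≤ 1/2 := (abs_le.mp hchalf).2
  set a := b + c with ha
  have hau : u/2 ≤ a := by nlinarith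
  have ha0 : (0:ℝ) < a := by linarith
  have hb0 : (0:ℝ) < b := by linarith
  have hbc4 : |b*c| ≤ 4*|t| := by
    rw [hbc, abs_div, abs_of_pos (by positivity : (0:ℝ) < x^2), div_le_iff₀ (by positivity)]
    nlinarith [mul_nonneg ht (show (0:ℝ) ≤ 4*x^2 - 1 by nlinarith)]
  set E := Real.exp (-t/x^2) with hE
  have hE0 : 0 < E := Real.exp_pos _
  have hEle : E ≤ Real.exp (4*|t|) := by
    apply Real.exp_le_exp.mpr
    have h : -(4*|t|) ≤ t/x^2 := by
      rw [le_div_iff₀ (by positivity : (0:ℝ) < x^2)]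
      nlinarith [neg_abs_le t, mul_nonneg ht (show (0:ℝ) ≤ 4*x^2 - 1 by nlinarith)]
    rw [neg_div]
    linarith
  set D := E * Real.exp (-c^2/2) with hD
  have hD0 : 0 < D := by positivity
  have hexp1 : Real.exp (-c^2/2) ≤ 1 := by
    have h := Real.exp_le_exp.mpr (show -c^2/2 ≤ (0:ℝ) by nlinarith [sq_nonneg c])
    simpa using h
  have hDE : D ≤ E := by nlinarith [Real.exp_pos (-c^2/2)]
  have hone_sub : 1 - Real.exp (-c^2/2) ≤ c^2/2 := by
    nlinarith [Real.add_one_le_exp (-c^2/2)]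
  have hφ : sφ a = sφ b * (E * Real.exp (-c^2/2)) := by
    rw [sφ, sφ, hE, mul_assoc, ← Real.exp_add, ← Real.exp_add]
    congr 1
    rw [ha, hb, hc]
    field_simp
    ring
  set T1 := 1 - stdNormalCDF a with hT1def
  set T2 := 1 - stdNormalCDF b with hT2def
  have hT1 : 0 < T1 := tail_pos a
  have hT2 : 0 < T2 := tail_pos b
  clear_value T1 T2 D E a b c
  -- upper bound on the ratio
  have hRu : T1/T2 ≤ (b^2+1)*D/(a*b) := by
    rw [div_le_div_iff₀ hT2 (by positivity)]
    have h1 : T1 * a ≤ sφ b * D := by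
      have h := mills_upper ha0
      rw [← hT1def, le_div_iff₀ ha0] at h
      rw [hφ, ← hD] at h
      linarith only [h]
    have h2 : b * sφ b ≤ T2 * (b^2+1) := by
      have h := mills_lower hb0
      rw [← hT2def, div_le_iff₀ (by positivity : (0:ℝ) < b^2+1)] at h
      linarith only [h]
    have k1 := mul_le_mul_of_nonneg_right h1 hb0.le
    have k2 := mul_le_mul_of_nonneg_right h2 hD0.le
    linarith only [k1, k2]
  -- lower bound on the ratio
  have hRl : a*b*D/(a^2+1) ≤ T1/T2 := by
    rw [div_le_div_iff₀ (by positivity : (0:ℝ) < a^2+1) hT2]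
    have h1 : a * (sφ b * D) ≤ T1 * (a^2+1) := by
      have h := mills_lower ha0
      rw [← hT1def, div_le_iff₀ (by positivity : (0:ℝ) < a^2+1)] at h
      rw [hφ, ← hD] at h
      linarith only [h]
    have h2 : T2 * b ≤ sφ b := by
      have h := mills_upper hb0
      rw [← hT2def, le_div_iff₀ hb0] at h
      linarith only [h]
    have k1 := mul_le_mul_of_nonneg_left h2 (by positivity : (0:ℝ) ≤ a * D)
    linarith only [k1, h1]
  -- numeric upper estimate
  have hup : T1/T2 - E ≤ Real.exp (4*|t|) * (2 + 8*|t|) / u^2 := by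
    have hab : (0:ℝ) < a*b := by positivity
    have e1 : (b^2+1)*E/(a*b) - E = E * (1 - b*c) / (a*b) := by
      rw [eq_div_iff hab.ne', sub_mul, div_mul_cancel₀ _ hab.ne', ha]
      ring
    have h2 : (b^2+1)*D/(a*b) ≤ (b^2+1)*E/(a*b) := by
      apply (div_le_div_iff_of_pos_right hab).mpr
      exact mul_le_mul_of_nonneg_left hDE (by positivity)
    have hn : E * (1 - b*c) ≤ E * (1 + 4*|t|) := by
      have := mul_le_mul_of_nonneg_left (abs_le.mp hbc4).1 hE0.le
      linarith only [this]
    have hd : u^2/2 ≤ a*b := by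
      have := mul_le_mul hau hbu hu0.le ha0.le
      linarith only [this]
    have h3 : E * (1 - b*c) / (a*b) ≤ 2 * (E * (1 + 4*|t|)) / u^2 := by
      rw [div_le_div_iff₀ hab (by positivity)]
      have k1 := mul_le_mul_of_nonneg_right hn (sq_nonneg u)
      have k2 := mul_le_mul_of_nonneg_left hd
        (by positivity : (0:ℝ) ≤ 2 * (E * (1 + 4*|t|)))
      linarith only [k1, k2]
    have h4 : 2 * (E * (1 + 4*|t|)) / u^2 ≤ Real.exp (4*|t|) * (2 + 8*|t|) / u^2 := by
      apply (div_le_div_iff_of_pos_right (by positivity : (0:ℝ) < u^2)).mpr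
      nlinarith [hEle, hE0]
    linarith only [hRu, e1, h2, h3, h4]
  -- numeric lower estimate
  have hlo : E - T1/T2 ≤ Real.exp (4*|t|) * (2*t^2 + 5 + 16*|t|) / u^2 := by
    have ha2 : (0:ℝ) < a^2+1 := by positivity
    have hac : a * |c| ≤ 4*|t| + 1/4 := by
      have e0 : a * |c| = b * |c| + c * |c| := by rw [ha]; ring
      have hb_c : b * |c| ≤ 4*|t| := by
        calc b * |c| = |b * c| := by rw [abs_mul, abs_of_pos hb0]
          _ ≤ 4*|t| := hbc4
      have k1 := mul_le_mul_of_nonneg_right (le_abs_self c) (abs_nonneg c)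
      have k2 := mul_self_le_mul_self (abs_nonneg c) hchalf
      linarith only [e0, hb_c, k1, k2]
    have e1 : 1 - a*b/(a^2+1) = (1 + a*c)/(a^2+1) := by
      rw [ha]
      field_simp
      ring
    have h5 : Real.exp (-c^2/2) * ((1 + a*c)/(a^2+1)) ≤ (1 + a*|c|)/(a^2+1) := by
      have hm : (1 + a*c)/(a^2+1) ≤ (1 + a*|c|)/(a^2+1) := by
        apply (div_le_div_iff_of_pos_right ha2).mpr
        have := mul_le_mul_of_nonneg_left (le_abs_self c) ha0.le
        linarith only [this]
      have hnn : (0:ℝ) ≤ (1 + a*|c|)/(a^2+1) := by positivity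
      have k1 := mul_le_mul_of_nonneg_left hm (Real.exp_pos (-c^2/2)).le
      have k2 := mul_le_of_le_one_left hnn hexp1
      linarith only [k1, k2]
    have e2 : E - a*b*D/(a^2+1)
        = E * ((1 - Real.exp (-c^2/2)) + Real.exp (-c^2/2) * ((1 + a*c)/(a^2+1))) := by
      rw [hD, ← e1]
      field_simp
      ring
    have key : E - a*b*D/(a^2+1) ≤ E * (c^2/2 + (1 + a*|c|)/(a^2+1)) := by
      rw [e2]
      apply mul_le_mul_of_nonneg_left _ hE0.le
      linarith only [hone_sub, h5]
    have ha2u : u^2/4 ≤ a^2+1 := by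
      have := mul_le_mul hau hau (by positivity) ha0.le
      nlinarith only [this]
    have h6 : (1 + a*|c|)/(a^2+1) ≤ (5 + 16*|t|)/u^2 := by
      rw [div_le_div_iff₀ ha2 (by positivity)]
      have k0 := mul_le_mul_of_nonneg_right
        (show 1 + a*|c| ≤ 5/4 + 4*|t| by linarith) (sq_nonneg u)
      have k1 := mul_le_mul_of_nonneg_left ha2u
        (by positivity : (0:ℝ) ≤ 5 + 16*|t|)
      linarith only [k0, k1]
    have h7 : c^2/2 ≤ 2*t^2/u^2 := by
      calc c^2/2 ≤ (4*t^2/u^2)/2 := by linarith only [hc2]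
        _ = 2*t^2/u^2 := by ring
    have h8 : E * (c^2/2 + (1 + a*|c|)/(a^2+1)) ≤ E * (2*t^2/u^2 + (5 + 16*|t|)/u^2) := by
      apply mul_le_mul_of_nonneg_left _ hE0.le
      linarith only [h6, h7]
    have e3 : E * (2*t^2/u^2 + (5 + 16*|t|)/u^2) = E * (2*t^2 + 5 + 16*|t|) / u^2 := by
      rw [← add_div, mul_div_assoc]
      ring_nf
    have h9 : E * (2*t^2 + 5 + 16*|t|) / u^2
        ≤ Real.exp (4*|t|) * (2*t^2 + 5 + 16*|t|) / u^2 := by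
      apply (div_le_div_iff_of_pos_right (by positivity : (0:ℝ) < u^2)).mpr
      exact mul_le_mul_of_nonneg_right hEle (by positivity)
    linarith only [hRl, key, h8, e3, h9]
  rw [abs_le]
  constructor
  · have h10 : Real.exp (4*|t|) * (2*t^2 + 5 + 16*|t|) / u^2
        ≤ Real.exp (4*|t|) * (2*t^2 + 8 + 24*|t|) / u^2 := by
      apply (div_le_div_iff_of_pos_right (by positivity : (0:ℝ) < u^2)).mpr
      exact mul_le_mul_of_nonneg_left (by linarith only [ht]) (Real.exp_pos (4*|t|)).le
    linarith only [hlo, h10]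
  · have h11 : Real.exp (4*|t|) * (2 + 8*|t|) / u^2
        ≤ Real.exp (4*|t|) * (2*t^2 + 8 + 24*|t|) / u^2 := by
      apply (div_le_div_iff_of_pos_right (by positivity : (0:ℝ) < u^2)).mpr
      exact mul_le_mul_of_nonneg_left (by nlinarith only [sq_nonneg t, ht]) (Real.exp_pos (4*|t|)).le
    linarith only [hup, h11]


end AuxGaussianTail

/-- uniform convergence on `[1/2, 1]` of the scaled Gaussian tail ratio. -/
theorem gaussian_tail_ratio_uniform (t : ℝ) :
    Tendsto (fun u : ℝ =>
        ⨆ x : Set.Icc (1/2 : ℝ) 1,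
          |(1 - stdNormalCDF (u / (x : ℝ) + t / ((x : ℝ) * u))) /
              (1 - stdNormalCDF (u / (x : ℝ))) -
            Real.exp (-t / (x : ℝ) ^ 2)|)
      atTop (nhds 0) := by
  haveI : Nonempty (Set.Icc (1/2 : ℝ) 1) := ⟨⟨1, by norm_num⟩⟩
  have hg : Tendsto (fun u : ℝ => Real.exp (4*|t|) * (2*t^2 + 8 + 24*|t|) / u^2)
      atTop (nhds 0) :=
    tendsto_const_nhds.div_atTop (tendsto_pow_atTop two_ne_zero)
  refine squeeze_zero' (.of_forall fun u => Real.iSup_nonneg fun x => abs_nonneg _) ?_ hg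
  filter_upwards [eventually_ge_atTop (2 + 4*|t|)] with u hu
  exact ciSup_le fun x => ratio_bound t (Set.mem_Icc.mp x.2).1 (Set.mem_Icc.mp x.2).2 hu
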